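/- Let p, q be coprime positive integers with p prime. Then there exist integers μ, ν1, ν2 with ν1, ν2 nonzero such that q/p = -p^{μ-1} * (ν1 + ν2)/(ν1 * ν2) as rational numbers. -/

import Mathlib

theorem exists_mu_nu_representation (p q : ℤ) (hp : Prime p) (hq : 0 < q)
    (hpq : IsCoprime p q) :
    ∃ (μ ν1 ν2 : ℤ), ν1 ≠ 0 ∧ ν2 ≠ 0 ∧
      (q : ℚ) / (p : ℚ) = -(p : ℚ) ^ (μ - 1) * ((ν1 : ℚ) + ν2) / ((ν1 : ℚ) * ν2) := by
  set n : ℕ := q.toNat with hn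
  have hqn : (n : ℤ) = q := Int.toNat_of_nonneg hq.le
  have hnpos : 0 < n := by omega
  set s : ℕ := n.totient with hs
  have hspos : 0 < s := Nat.totient_pos.mpr hnpos
  -- q ∣ p^s - 1
  have hq0 : ((q : ℤ) : ZMod n) = 0 := by
    rw [← hqn]; exact_mod_cast ZMod.natCast_self n
  have hu : IsUnit ((p : ℤ) : ZMod n) := by
    have h := hpq.map (Int.castRingHom (ZMod n))
    simp only [Int.coe_castRingHom, hq0] at h
    exact (isCoprime_zero_right).mp h
  have hpow : ((p : ℤ) : ZMod n) ^ s = 1 := by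
    have h := congrArg (Units.val) (ZMod.pow_totient hu.unit)
    simp only [Units.val_pow_eq_pow_val, Units.val_one, hu.unit_spec] at h
    exact h
  have hdvd : q ∣ p ^ s - 1 := by
    rw [← hqn]
    rw [← ZMod.intCast_zmod_eq_zero_iff_dvd]
    push_cast
    rw [hpow]; ring
  obtain ⟨a, ha⟩ := hdvd
  have hp0 : (p : ℚ) ≠ 0 := by exact_mod_cast hp.ne_zero
  have hp2 : 2 ≤ p.natAbs := (Int.prime_iff_natAbs_prime.mp hp).two_le
  have hps1 : p ^ s ≠ 1 := by
    intro h
    have : (p ^ s).natAbs = 1 := by rw [h]; rfl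
    rw [Int.natAbs_pow] at this
    have := Nat.one_lt_pow hspos.ne' (by omega : 1 < p.natAbs)
    omega
  have ha0 : a ≠ 0 := by
    intro h; rw [h, mul_zero] at ha; omega
  refine ⟨(s : ℤ), a * p ^ s, -a, ?_, ?_, ?_⟩
  · exact mul_ne_zero ha0 (pow_ne_zero _ hp.ne_zero)
  · simpa using ha0
  · have hq' : (q : ℚ) * a = (p : ℚ) ^ s - 1 := by exact_mod_cast ha.symm
    have ha0' : (a : ℚ) ≠ 0 := by exact_mod_cast ha0
    rw [zpow_sub₀ hp0, zpow_natCast, zpow_one]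
    push_cast
    field_simp
    linear_combination hq'
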